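/- Let A be a real or complex unital Banach algebra equipped with a continuous ℝ-linear involution * (an additive, antimultiplicative, involutive map). If a closed linear subspace L of A is closed under conjugation with unitaries (that is, u x u* ∈ L for every x ∈ L and every u ∈ A with u* = u^{-1}), then L is a Lie skew-ideal of A: [k, x] ∈ L for every x ∈ L and every k ∈ A with k* = −k. -/

import Mathlib

open NormedSpace

/-- **Proposition 3.5.** Let `A` be a real (or complex, viewed as real) unital Banach
algebra with a continuous `ℝ`-linear involution `st` (additive, antimultiplicative,
involutive).  If a closed linear subspace `L` of `A` is closed under conjugation with
unitaries (`u x u* ∈ L` for all `x ∈ L` and all `u` with `u* = u⁻¹`, i.e.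
`u * u* = 1 = u* * u`), then `L` is a Lie skew-ideal of `A`: `[k,x] ∈ L` for every
`x ∈ L` and every skew-symmetric `k`. -/
theorem stmt_4 (A : Type*) [NormedRing A] [NormedAlgebra ℝ A] [CompleteSpace A]
    (st : A → A) (hcont : Continuous st)
    (hadd : ∀ x y, st (x + y) = st x + st y)
    (hmul : ∀ x y, st (x * y) = st y * st x)
    (hinv : ∀ x, st (st x) = x)
    (hlin : ∀ (r : ℝ) (x : A), st (r • x) = r • st x)
    (L : Submodule ℝ A) (hclosed : IsClosed (L : Set A))
    (hconj : ∀ x ∈ L, ∀ u : A, u * st u = 1 → st u * u = 1 → u * x * st u ∈ L) :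
    ∀ x ∈ L, ∀ k : A, st k = -k → k * x - x * k ∈ L := by
  intro x hx k hk
  -- st as a continuous linear map
  let φ : A →L[ℝ] A := ⟨⟨⟨st, hadd⟩, hlin⟩, hcont⟩
  have hφ : ∀ a, φ a = st a := fun _ => rfl
  -- st 1 = 1
  have h1 : st 1 = 1 := by
    have h := hmul (st 1) 1
    rw [mul_one, hinv] at h
    rw [mul_one] at h
    exact h.symm
  -- st of powers
  have hpow : ∀ (a : A) (n : ℕ), st (a ^ n) = (st a) ^ n := by
    intro a n
    induction n with
    | zero => simpa using h1
    | succ n ih => rw [pow_succ, hmul, ih, pow_succ']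
  -- st of exp
  have hexp : ∀ a : A, st (exp a) = exp (st a) := by
    intro a
    have hsum : Summable fun n : ℕ => ((Nat.factorial n : ℝ))⁻¹ • a ^ n := expSeries_summable' a
    calc st (exp a) = φ (∑' n : ℕ, ((Nat.factorial n : ℝ))⁻¹ • a ^ n) := by
          rw [hφ, exp_eq_tsum ℝ]
      _ = ∑' n : ℕ, φ (((Nat.factorial n : ℝ))⁻¹ • a ^ n) := φ.map_tsum hsum
      _ = ∑' n : ℕ, ((Nat.factorial n : ℝ))⁻¹ • (st a) ^ n := by
          refine tsum_congr fun n => ?_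
          rw [hφ, hlin, hpow]
      _ = exp (st a) := by rw [exp_eq_tsum ℝ]
  -- the curve f t = exp(t•k) * x * exp(t•(-k)) lies in L
  set f : ℝ → A := fun t => exp (t • k) * x * exp (t • (-k)) with hf
  have hmemf : ∀ t : ℝ, f t ∈ L := by
    intro t
    have hstu : st (exp (t • k)) = exp (t • (-k)) := by
      rw [hexp, hlin, hk]
    have hcomm : Commute (t • k) (t • (-k)) := by
      simp [Commute, SemiconjBy, smul_neg, mul_smul_comm, smul_mul_assoc]
    letI : NormedAlgebra ℚ A := NormedAlgebra.restrictScalars ℚ ℝ A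
    have h1' : exp (t • k) * exp (t • (-k)) = 1 := by
      rw [← exp_add_of_commute hcomm]
      simp [exp_zero]
    have h2' : exp (t • (-k)) * exp (t • k) = 1 := by
      rw [← exp_add_of_commute hcomm.symm]
      simp [exp_zero]
    have := hconj x hx (exp (t • k)) (by rw [hstu]; exact h1') (by rw [hstu]; exact h2')
    rwa [hstu] at this
  -- f is differentiable at 0 with derivative k*x - x*k
  have hd1 : HasDerivAt (fun t : ℝ => exp (t • k)) (k * exp ((0:ℝ) • k)) 0 :=
    hasDerivAt_exp_smul_const' k (0:ℝ)
  have hd2 : HasDerivAt (fun t : ℝ => exp (t • (-k))) ((-k) * exp ((0:ℝ) • (-k))) 0 :=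
    hasDerivAt_exp_smul_const' (-k) (0:ℝ)
  have hd1' : HasDerivAt (fun t : ℝ => exp (t • k)) k 0 := by
    simpa [exp_zero] using hd1
  have hd2' : HasDerivAt (fun t : ℝ => exp (t • (-k))) (-k) 0 := by
    simpa [exp_zero] using hd2
  have hdf : HasDerivAt f (k * x - x * k) 0 := by
    have := ((hd1'.mul (hasDerivAt_const (0:ℝ) x)).mul hd2')
    simpa [hf, exp_zero, mul_comm, sub_eq_add_neg, Pi.mul_def] using this
  -- the derivative is a limit of slopes, all in L
  have hslope : Filter.Tendsto (slope f 0) (nhdsWithin 0 {0}ᶜ)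
      (nhds (k * x - x * k)) := by
    rwa [hasDerivAt_iff_tendsto_slope] at hdf
  have hmem_slope : ∀ t : ℝ, slope f 0 t ∈ L := fun t => by
    rw [slope_def_module]
    exact L.smul_mem _ (L.sub_mem (hmemf t) (hmemf 0))
  exact hclosed.mem_of_tendsto hslope
    (Filter.Eventually.of_forall fun t => hmem_slope t)
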